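/- Let T be a d×d complex matrix such that 0 lies in the interior of the numerical range W(T) (as a subset of ℂ). If A, B, C are n×n complex matrices such that A ⊗ I_d + B ⊗ T + C ⊗ Tᴴ is positive semidefinite, then A is positive semidefinite and C = Bᴴ. -/

import Mathlib

open Matrix Kronecker
open scoped ComplexOrder

/-- The numerical range of a complex matrix: `{ xᴴ A x : ‖x‖ = 1 }`. -/
def numericalRange {d : ℕ} (A : Matrix (Fin d) (Fin d) ℂ) : Set ℂ :=
  {z : ℂ | ∃ x : Fin d → ℂ, star x ⬝ᵥ x = 1 ∧ star x ⬝ᵥ (A *ᵥ x) = z}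

lemma kron_quad {n d : ℕ} (P : Matrix (Fin n) (Fin n) ℂ) (Q : Matrix (Fin d) (Fin d) ℂ)
    (y : Fin n → ℂ) (x : Fin d → ℂ) :
    star (fun p : Fin n × Fin d => y p.1 * x p.2) ⬝ᵥ ((P ⊗ₖ Q) *ᵥ fun p => y p.1 * x p.2)
      = (star y ⬝ᵥ (P *ᵥ y)) * (star x ⬝ᵥ (Q *ᵥ x)) := by
  simp only [dotProduct, mulVec, kroneckerMap_apply, Fintype.sum_prod_type, Pi.star_apply,
    star_mul']
  rw [Finset.sum_mul_sum]
  refine Finset.sum_congr rfl fun i _ => Finset.sum_congr rfl fun k _ => ?_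
  rw [mul_mul_mul_comm, Finset.sum_mul_sum]
  rw [Finset.mul_sum, Finset.mul_sum]
  refine Finset.sum_congr rfl fun j _ => ?_
  rw [Finset.mul_sum, Finset.mul_sum]
  refine Finset.sum_congr rfl fun l _ => ?_
  ring

lemma ct_quad {n : ℕ} (M : Matrix (Fin n) (Fin n) ℂ) (y : Fin n → ℂ) :
    star y ⬝ᵥ (Mᴴ *ᵥ y) = star (star y ⬝ᵥ (M *ᵥ y)) := by
  simp only [dotProduct, mulVec, conjTranspose_apply, Pi.star_apply, star_sum, star_mul',
    star_star, Finset.mul_sum]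
  rw [Finset.sum_comm]
  exact Finset.sum_congr rfl fun i _ => Finset.sum_congr rfl fun j _ => by ring

lemma single_quad {n : ℕ} (D : Matrix (Fin n) (Fin n) ℂ) (i j : Fin n) (c c' : ℂ) :
    star (Pi.single i c) ⬝ᵥ (D *ᵥ Pi.single j c') = star c * D i j * c' := by
  simp only [dotProduct, mulVec, Pi.star_apply, Pi.single_apply,
    apply_ite (star : ℂ → ℂ), star_zero, mul_ite, mul_zero, ite_mul, zero_mul,
    Finset.sum_ite_eq', Finset.mem_univ, if_true]
  ring

lemma quad_zero {n : ℕ} (D : Matrix (Fin n) (Fin n) ℂ)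
    (h : ∀ y : Fin n → ℂ, star y ⬝ᵥ (D *ᵥ y) = 0) : D = 0 := by
  ext i j
  have diag : ∀ k, D k k = 0 := by
    intro k
    have := h (Pi.single k 1)
    rwa [single_quad, star_one, one_mul, mul_one] at this
  by_cases hij : i = j
  · simp [hij, diag]
  · have expand : ∀ c c' : ℂ,
        star c * D i j * c' + star c' * D j i * c = 0 := by
      intro c c'
      have h0 := h (Pi.single i c + Pi.single j c')
      rw [star_add, mulVec_add, dotProduct_add, add_dotProduct, add_dotProduct,
        single_quad, single_quad, single_quad, single_quad, diag, diag] at h0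
      have h1 : star c' * D j i * c + star c * D i j * c' = 0 := by
        simpa [hij] using h0
      linear_combination h1
    have e1 := expand 1 1
    have e2 := expand 1 Complex.I
    simp only [star_one, one_mul, mul_one, Complex.star_def, Complex.conj_I] at e1 e2
    have h2 : (2 * Complex.I) * D i j = 0 := by
      have h1 : D j i = - D i j := by linear_combination e1
      rw [h1] at e2
      linear_combination e2
    rcases mul_eq_zero.mp h2 with h3 | h3
    · exact absurd h3 (by simp [Complex.I_ne_zero])
    · simp [h3]

theorem form_of_positive_element {d n : ℕ} (T : Matrix (Fin d) (Fin d) ℂ)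
    (hT : (0 : ℂ) ∈ interior (numericalRange T))
    (A B C : Matrix (Fin n) (Fin n) ℂ)
    (h : (A ⊗ₖ (1 : Matrix (Fin d) (Fin d) ℂ) + B ⊗ₖ T + C ⊗ₖ Tᴴ).PosSemidef) :
    A.PosSemidef ∧ C = Bᴴ := by
  obtain ⟨ε, hε, hball⟩ : ∃ ε > 0, Metric.ball (0 : ℂ) ε ⊆ numericalRange T := by
    rw [mem_interior_iff_mem_nhds] at hT
    exact Metric.mem_nhds_iff.mp hT
  have key : ∀ (y : Fin n → ℂ) (w : ℂ), w ∈ numericalRange T →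
      0 ≤ (star y ⬝ᵥ (A *ᵥ y)) + (star y ⬝ᵥ (B *ᵥ y)) * w + (star y ⬝ᵥ (C *ᵥ y)) * star w := by
    intro y w hw
    obtain ⟨x, hx1, hxw⟩ := hw
    have e := h.dotProduct_mulVec_nonneg (fun p : Fin n × Fin d => y p.1 * x p.2)
    rw [add_mulVec, add_mulVec, dotProduct_add, dotProduct_add,
      kron_quad, kron_quad, kron_quad, one_mulVec, hx1, hxw, ct_quad, hxw, mul_one] at e
    exact e
  -- the three sample points
  have hw0 : (0 : ℂ) ∈ numericalRange T := hball (by simpa using hε)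
  have hnorm : ∀ z : ℂ, ‖z‖ = ε / 2 → z ∈ numericalRange T := by
    intro z hz
    apply hball
    simp only [Metric.mem_ball, dist_zero_right, hz]
    linarith
  have hw1 : ((ε / 2 : ℝ) : ℂ) ∈ numericalRange T := by
    apply hnorm
    simp [abs_of_pos, hε, le_of_lt hε]
  have hw2 : ((ε / 2 : ℝ) : ℂ) * Complex.I ∈ numericalRange T := by
    apply hnorm
    simp [abs_of_pos, hε, le_of_lt hε]
  -- pointwise facts
  have main : ∀ y : Fin n → ℂ,
      0 ≤ star y ⬝ᵥ (A *ᵥ y) ∧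
      star y ⬝ᵥ (C *ᵥ y) = star (star y ⬝ᵥ (B *ᵥ y)) := by
    intro y
    set a := star y ⬝ᵥ (A *ᵥ y) with ha
    set b := star y ⬝ᵥ (B *ᵥ y) with hb
    set c := star y ⬝ᵥ (C *ᵥ y) with hc
    have h0 := key y 0 hw0
    simp only [mul_zero, star_zero, add_zero] at h0
    have haim : a.im = 0 := ((Complex.le_def.mp h0).2).symm
    have h1 := key y _ hw1
    have h2 := key y _ hw2
    have t2 : (0:ℝ) < ε / 2 := by linarith
    have h1im : (a + b * ((ε/2 : ℝ) : ℂ) + c * star ((ε/2 : ℝ) : ℂ)).im = 0 :=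
      ((Complex.le_def.mp h1).2).symm
    have h2im : (a + b * (((ε/2 : ℝ) : ℂ) * Complex.I)
        + c * star (((ε/2 : ℝ) : ℂ) * Complex.I)).im = 0 := ((Complex.le_def.mp h2).2).symm
    simp only [Complex.add_im, Complex.mul_im, Complex.ofReal_re, Complex.ofReal_im,
      Complex.star_def, Complex.conj_ofReal, haim, Complex.mul_re, Complex.I_re,
      Complex.I_im, _root_.map_mul, Complex.conj_I, Complex.conj_re, Complex.conj_im,
      Complex.neg_im, Complex.neg_re] at h1im h2im
    constructor
    · exact h0
    · have him : c.im = - b.im := by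
        have : (ε/2) * (b.im + c.im) = 0 := by linarith [h1im]
        have := (mul_eq_zero.mp this).resolve_left (ne_of_gt t2)
        linarith
      have hre : c.re = b.re := by
        have : (ε/2) * (b.re - c.re) = 0 := by
          nlinarith [h2im]
        have := (mul_eq_zero.mp this).resolve_left (ne_of_gt t2)
        linarith
      apply Complex.ext
      · simpa using hre
      · simpa using him
  constructor
  · constructor
    · have hz : Aᴴ - A = 0 := by
        apply quad_zero
        intro y
        rw [sub_mulVec, dotProduct_sub, ct_quad]
        have := (main y).1
        have him : (star y ⬝ᵥ (A *ᵥ y)).im = 0 := ((Complex.le_def.mp this).2).symm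
        rw [Complex.star_def, Complex.conj_eq_iff_im.mpr him, sub_self]
      unfold Matrix.IsHermitian
      rw [← sub_eq_zero]
      exact hz
    · intro y
      simpa [dotProduct, mulVec, Finsupp.sum_fintype, Finset.mul_sum, mul_assoc] using (main y).1
  · have hz : C - Bᴴ = 0 := by
      apply quad_zero
      intro y
      rw [sub_mulVec, dotProduct_sub, ct_quad, (main y).2, sub_self]
    rw [← sub_eq_zero]
    exact hz
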